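/- Let G be a bipartite graph with parts A_G, B_G (no isolated vertices, |A_G| ≤ |B_G|), and let H be any finite graph with at least one vertex. If (|A_G| + |B_G|)/|A_G| ≥ (Δ(G) + Δ(H) + 1)·γ(H)/|V(H)|, then γ(G □ H) ≥ γ(G)·γ(H). -/

import Mathlib

def IsDominatingSet {V : Type*} (G : SimpleGraph V) (D : Set V) : Prop :=
  ∀ v, v ∈ D ∨ ∃ u ∈ D, G.Adj u v

noncomputable def domNum {V : Type*} (G : SimpleGraph V) [Fintype V] : ℕ :=
  sInf {n | ∃ D : Finset V, IsDominatingSet G ↑D ∧ D.card = n}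

noncomputable def maxDeg {V : Type*} (G : SimpleGraph V) [Fintype V] : ℕ :=
  Finset.univ.sup fun v => (G.neighborSet v).ncard

def IsBipartition {V : Type*} (G : SimpleGraph V) (A B : Finset V) : Prop :=
  Disjoint A B ∧ (∀ v, v ∈ A ∨ v ∈ B) ∧
    ∀ u v, G.Adj u v → (u ∈ A ∧ v ∈ B) ∨ (u ∈ B ∧ v ∈ A)

lemma domNum_spec {V : Type*} [Fintype V] (G : SimpleGraph V) :
    ∃ D : Finset V, IsDominatingSet G ↑D ∧ D.card = domNum G := by
  have hne : {n | ∃ D : Finset V, IsDominatingSet G ↑D ∧ D.card = n}.Nonempty :=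
    ⟨(Finset.univ : Finset V).card, Finset.univ, fun v => Or.inl (by simp), rfl⟩
  exact Nat.sInf_mem hne

lemma domNum_le_card {V : Type*} [Fintype V] (G : SimpleGraph V) (D : Finset V)
    (hD : IsDominatingSet G ↑D) : domNum G ≤ D.card :=
  Nat.sInf_le ⟨D, hD, rfl⟩

lemma ncard_neighbor_le_maxDeg {V : Type*} [Fintype V] (G : SimpleGraph V) (v : V) :
    (G.neighborSet v).ncard ≤ maxDeg G :=
  Finset.le_sup (f := fun v => (G.neighborSet v).ncard) (Finset.mem_univ v)

lemma card_le_domNum_mul {V : Type*} [Fintype V] (G : SimpleGraph V) :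
    Fintype.card V ≤ domNum G * (maxDeg G + 1) := by
  classical
  obtain ⟨D, hD, hcard⟩ := domNum_spec G
  have hsub : (Finset.univ : Finset V) ⊆
      D.biUnion (fun u => insert u (G.neighborFinset u)) := by
    intro v _
    rcases hD v with hv | ⟨u, hu, hadj⟩
    · exact Finset.mem_biUnion.2 ⟨v, hv, Finset.mem_insert_self _ _⟩
    · exact Finset.mem_biUnion.2 ⟨u, hu,
        Finset.mem_insert_of_mem (by simpa using hadj)⟩
  calc Fintype.card V = (Finset.univ : Finset V).card := (Finset.card_univ).symm
    _ ≤ (D.biUnion (fun u => insert u (G.neighborFinset u))).card :=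
        Finset.card_le_card hsub
    _ ≤ ∑ u ∈ D, (insert u (G.neighborFinset u)).card := Finset.card_biUnion_le
    _ ≤ ∑ _u ∈ D, (maxDeg G + 1) := by
        refine Finset.sum_le_sum fun u _ => ?_
        calc (insert u (G.neighborFinset u)).card ≤ (G.neighborFinset u).card + 1 :=
              Finset.card_insert_le _ _
          _ ≤ maxDeg G + 1 := by
              have h1 : (G.neighborSet u).ncard = (G.neighborFinset u).card := by
                rw [SimpleGraph.neighborFinset_def, Set.ncard_eq_toFinset_card']
              have := ncard_neighbor_le_maxDeg G u
              omega
    _ = D.card * (maxDeg G + 1) := by rw [Finset.sum_const, smul_eq_mul]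
    _ = domNum G * (maxDeg G + 1) := by rw [hcard]

lemma maxDeg_boxProd_le {V W : Type*} [Fintype V] [Fintype W]
    (G : SimpleGraph V) (H : SimpleGraph W) :
    maxDeg (G □ H) ≤ maxDeg G + maxDeg H := by
  refine Finset.sup_le fun x _ => ?_
  rw [SimpleGraph.neighborSet_boxProd]
  calc (G.neighborSet x.1 ×ˢ {x.2} ∪ {x.1} ×ˢ H.neighborSet x.2).ncard
      ≤ (G.neighborSet x.1 ×ˢ {x.2}).ncard + ({x.1} ×ˢ H.neighborSet x.2).ncard :=
        Set.ncard_union_le _ _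
    _ ≤ maxDeg G + maxDeg H := by
        gcongr
        · rw [Set.prod_singleton, Set.ncard_image_of_injective _
            (fun a b h => (Prod.mk.injEq _ _ _ _ ▸ h).1)]
          exact ncard_neighbor_le_maxDeg G x.1
        · rw [Set.singleton_prod, Set.ncard_image_of_injective _
            (fun a b h => (Prod.mk.injEq _ _ _ _ ▸ h).2)]
          exact ncard_neighbor_le_maxDeg H x.2

theorem stmt5 {V W : Type*} [Fintype V] [Fintype W] [Nonempty W]
    (G : SimpleGraph V) (H : SimpleGraph W)
    (AG BG : Finset V)
    (hGbip : IsBipartition G AG BG)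
    (hGle : AG.card ≤ BG.card)
    (hGiso : ∀ v : V, ∃ u, G.Adj v u)
    (hcond : ((AG.card : ℚ) + BG.card) / AG.card ≥
      ((maxDeg G : ℚ) + maxDeg H + 1) * (domNum H : ℚ) / (Fintype.card W : ℚ)) :
    domNum (G □ H) ≥ domNum G * domNum H := by
  classical
  obtain ⟨hdisj, hcover, hadj⟩ := hGbip
  -- γ(H) ≥ 1
  have hHpos : 1 ≤ domNum H := by
    by_contra h
    push_neg at h
    rw [Nat.lt_one_iff] at h
    obtain ⟨D, hD, hc⟩ := domNum_spec H
    rw [h, Finset.card_eq_zero] at hc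
    obtain ⟨w⟩ := ‹Nonempty W›
    rcases hD w with h1 | ⟨u, hu, _⟩
    · simp [hc] at h1
    · simp [hc] at hu
  have hWpos : 0 < Fintype.card W := Fintype.card_pos
  -- AG is nonempty (else hcond is contradictory)
  have hApos : 0 < AG.card := by
    by_contra h
    push_neg at h
    rw [Nat.le_zero] at h
    rw [h] at hcond
    have hlt : (0:ℚ) < ((maxDeg G : ℚ) + maxDeg H + 1) * (domNum H : ℚ) / (Fintype.card W : ℚ) := by
      have h1 : (0:ℚ) < (domNum H : ℚ) := by exact_mod_cast hHpos
      have h2 : (0:ℚ) < (Fintype.card W : ℚ) := by exact_mod_cast hWpos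
      positivity
    simp only [Nat.cast_zero, div_zero, zero_add] at hcond
    linarith
  -- |V| = |A| + |B|
  have hVcard : Fintype.card V = AG.card + BG.card := by
    rw [← Finset.card_union_of_disjoint hdisj, ← Finset.card_univ]
    congr 1
    exact (Finset.eq_univ_iff_forall.2 fun v => Finset.mem_union.2 (hcover v)).symm
  -- cross-multiply the hypothesis
  have key : ((maxDeg G : ℕ) + maxDeg H + 1) * domNum H * AG.card
      ≤ (AG.card + BG.card) * Fintype.card W := by
    have hA : (0:ℚ) < (AG.card : ℚ) := by exact_mod_cast hApos
    have hW : (0:ℚ) < (Fintype.card W : ℚ) := by exact_mod_cast hWpos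
    rw [ge_iff_le, div_le_div_iff₀ hW hA] at hcond
    have : (((maxDeg G : ℕ) + maxDeg H + 1) * domNum H * AG.card : ℚ)
        ≤ ((AG.card + BG.card) * Fintype.card W : ℚ) := by push_cast; linarith
    exact_mod_cast this
  -- γ(G) ≤ |A|
  have hGA : domNum G ≤ AG.card := by
    refine domNum_le_card G AG fun v => ?_
    rcases hcover v with hv | hv
    · exact Or.inl (by simpa using hv)
    · obtain ⟨u, huv⟩ := hGiso v
      rcases hadj v u huv with ⟨h1, _⟩ | ⟨_, h2⟩
      · exact absurd (hdisj.forall_ne_finset h1 hv) (fun hne => hne rfl)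
      · exact Or.inr ⟨u, by simpa using h2, huv.symm⟩
  -- counting bound
  have h1 : Fintype.card V * Fintype.card W ≤ domNum (G □ H) * (maxDeg G + maxDeg H + 1) := by
    calc Fintype.card V * Fintype.card W = Fintype.card (V × W) := (Fintype.card_prod V W).symm
      _ ≤ domNum (G □ H) * (maxDeg (G □ H) + 1) := card_le_domNum_mul _
      _ ≤ domNum (G □ H) * (maxDeg G + maxDeg H + 1) := by
          have := maxDeg_boxProd_le G H
          exact Nat.mul_le_mul_left _ (by omega)
  -- final chain in ℕ
  have h2 : (maxDeg G + maxDeg H + 1) * (domNum G * domNum H)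
      ≤ (maxDeg G + maxDeg H + 1) * domNum (G □ H) := by
    calc (maxDeg G + maxDeg H + 1) * (domNum G * domNum H)
        ≤ (maxDeg G + maxDeg H + 1) * domNum H * AG.card := by
          rw [mul_assoc]
          exact Nat.mul_le_mul_left _ (by
            rw [mul_comm (domNum G)]
            exact Nat.mul_le_mul_left _ hGA)
      _ ≤ (AG.card + BG.card) * Fintype.card W := key
      _ = Fintype.card V * Fintype.card W := by rw [hVcard]
      _ ≤ domNum (G □ H) * (maxDeg G + maxDeg H + 1) := h1
      _ = (maxDeg G + maxDeg H + 1) * domNum (G □ H) := Nat.mul_comm _ _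
  exact Nat.le_of_mul_le_mul_left h2 (by omega)
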